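/- For every n ≥ 1 the Eulerian idempotent satisfies the symmetry eₙ = (−1)^{n+1} · eₙ∘(·)^ω, where ω is the permutation of {1,…,n} given by ω(i) = n+1−i; explicitly, for every word w₁⋯wₙ of length n in the letters x and y, eₙ(w₁⋯wₙ) = (−1)^{n+1} eₙ(wₙwₙ₋₁⋯w₁). -/

import Mathlib

noncomputable section

open scoped BigOperators

variable (K : Type) [Field K] [CharZero K]

/-- The free associative algebra `T = K⟨x,y⟩`, realized as the monoid algebra of the
free monoid on two generators. -/
abbrev T := MonoidAlgebra K (FreeMonoid (Fin 2))

/-- The word `v₁⋯vₙ` (a list of letters) as an element of `T`. -/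
def word (l : List (Fin 2)) : T K := MonoidAlgebra.single (FreeMonoid.ofList l) 1

/-- The generator `x`. -/
def X : T K := word K [0]

/-- The generator `y`. -/
def Y : T K := word K [1]

/-- Right-nested bracket `[v₁,[v₂,…,[vₙ₋₁,vₙ]…]]` of a word. -/
def brList : List (Fin 2) → T K
  | [] => 0
  | [v] => word K [v]
  | v :: rest => word K [v] * brList rest - brList rest * word K [v]

/-- The Dynkin map `γ : T → T`, sending a word `v₁⋯vₙ` to
`(1/n)[v₁,[v₂,…,[vₙ₋₁,vₙ]…]]` (and `1 ↦ 0`). -/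
def dynkin : T K →ₗ[K] T K :=
  (Finsupp.linearCombination K fun w : FreeMonoid (Fin 2) =>
    ((w.toList.length : K)⁻¹) • brList K w.toList) ∘ₗ
    (MonoidAlgebra.coeffLinearEquiv K : T K ≃ₗ[K] _).toLinearMap

attribute [local instance] LieRing.ofAssociativeRing

/-- The free Lie algebra `L` on `x, y`, as the Lie subalgebra of `T` generated by `x` and `y`. -/
def L : LieSubalgebra K (T K) := LieSubalgebra.lieSpan K (T K) {X K, Y K}

/-- The degree-`n` homogeneous component `T_n` of `T`, spanned by the words of length `n`. -/
def homog (n : ℕ) : Submodule K (T K) :=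
  Submodule.span K { t | ∃ l : List (Fin 2), l.length = n ∧ t = word K l }

/-- The value `σ(i)` of a permutation of `{0,…,n-1}` on a natural number (junk value `0`
outside the range). -/
def permVal {n : ℕ} (σ : Equiv.Perm (Fin n)) (i : ℕ) : ℕ :=
  if h : i < n then (σ ⟨i, h⟩ : ℕ) else 0

/-- The (0-indexed) descent set of a permutation: positions `i ∈ {0,…,n-2}` with
`σ(i) > σ(i+1)`. -/
def descSet {n : ℕ} (σ : Equiv.Perm (Fin n)) : Finset ℕ :=
  (Finset.range (n - 1)).filter fun i => permVal σ (i + 1) < permVal σ i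

/-- The number of descents of a permutation. -/
def descNum {n : ℕ} (σ : Equiv.Perm (Fin n)) : ℕ := (descSet σ).card

/-- `DSet n k` is the set of permutations of `{0,…,n-1}` whose descent set is exactly
the first `k` positions (this is `D_{1..k}` of the paper, in 0-indexed form). -/
def DSet (n k : ℕ) : Finset (Equiv.Perm (Fin n)) :=
  Finset.univ.filter fun σ => descSet σ = Finset.range k

/-- The Eulerian coefficient `c_σ = (-1)^{d(σ)} (binom (n-1) (d σ))⁻¹`. -/
def eulCoeff {n : ℕ} (σ : Equiv.Perm (Fin n)) : K :=
  (-1 : K) ^ descNum σ * ((Nat.choose (n - 1) (descNum σ) : K))⁻¹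

/-- The degree-`n` Eulerian idempotent applied to the word `w₁⋯wₙ` given by
`v : Fin n → Fin 2`: `eₙ(w) = Σ_σ c_σ w^σ`. -/
def eul (n : ℕ) (v : Fin n → Fin 2) : T K :=
  ∑ σ : Equiv.Perm (Fin n), eulCoeff K σ • word K (List.ofFn fun i => v (σ i))

/-- The `a`-part of an element of `T`: the linear map sending a word `a·w ↦ w` and
any word not starting with the letter `a` (or the empty word) to `0`.  For `p` with zero
constant term, `p = x·(letterPart 0 p) + y·(letterPart 1 p)`. -/
def letterPart (a : Fin 2) : T K →ₗ[K] T K :=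
  (Finsupp.linearCombination K fun w : FreeMonoid (Fin 2) =>
    match w.toList with
    | [] => 0
    | b :: rest => if b = a then word K rest else 0) ∘ₗ
    (MonoidAlgebra.coeffLinearEquiv K : T K ≃ₗ[K] _).toLinearMap

/-- The algebra endomorphism `s : T → T` with `s(x) = -y`, `s(y) = -x`. -/
def sMap : T K →ₐ[K] T K :=
  MonoidAlgebra.lift K (T K) (FreeMonoid (Fin 2))
    (FreeMonoid.lift fun a : Fin 2 => if a = 0 then -(Y K) else -(X K))


lemma descSet_subset_aux {n : ℕ} (σ : Equiv.Perm (Fin n)) :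
    descSet σ ⊆ Finset.range (n - 1) := Finset.filter_subset _ _

lemma descNum_le_aux {n : ℕ} (σ : Equiv.Perm (Fin n)) : descNum σ ≤ n - 1 := by
  have := Finset.card_le_card (descSet_subset_aux σ)
  simpa [descNum] using this

lemma descSet_revPerm_mul {n : ℕ} (σ : Equiv.Perm (Fin n)) :
    descSet (Fin.revPerm * σ) = Finset.range (n - 1) \ descSet σ := by
  ext i
  simp only [descSet, Finset.mem_filter, Finset.mem_sdiff, Finset.mem_range]
  constructor
  · rintro ⟨hi, h⟩
    refine ⟨hi, fun hc => ?_⟩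
    have h1 : i < n := by omega
    have h2 : i + 1 < n := by omega
    have hc2 := hc.2
    simp only [permVal, dif_pos h1, dif_pos h2, Equiv.Perm.mul_apply,
      Fin.revPerm_apply, Fin.val_rev] at h hc2
    have hlt1 : (σ ⟨i, h1⟩ : ℕ) < n := (σ ⟨i, h1⟩).isLt
    have hlt2 : (σ ⟨i + 1, h2⟩ : ℕ) < n := (σ ⟨i + 1, h2⟩).isLt
    omega
  · rintro ⟨hi, h'⟩
    have h : ¬ (permVal σ (i + 1) < permVal σ i) := fun hc => h' ⟨hi, hc⟩
    refine ⟨hi, ?_⟩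
    have h1 : i < n := by omega
    have h2 : i + 1 < n := by omega
    have hne : σ ⟨i, h1⟩ ≠ σ ⟨i + 1, h2⟩ := by
      intro hc
      have := σ.injective hc
      simp [Fin.ext_iff] at this
    have hne' : (σ ⟨i, h1⟩ : ℕ) ≠ (σ ⟨i + 1, h2⟩ : ℕ) := fun hc => hne (Fin.ext hc)
    simp only [permVal, dif_pos h1, dif_pos h2] at h
    simp only [permVal, dif_pos h1, dif_pos h2, Equiv.Perm.mul_apply,
      Fin.revPerm_apply, Fin.val_rev]
    have hlt1 : (σ ⟨i, h1⟩ : ℕ) < n := (σ ⟨i, h1⟩).isLt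
    have hlt2 : (σ ⟨i + 1, h2⟩ : ℕ) < n := (σ ⟨i + 1, h2⟩).isLt
    omega

lemma descNum_revPerm_mul {n : ℕ} (σ : Equiv.Perm (Fin n)) :
    descNum (Fin.revPerm * σ) = (n - 1) - descNum σ := by
  rw [descNum, descSet_revPerm_mul, Finset.card_sdiff_of_subset (descSet_subset_aux σ),
    Finset.card_range]
  rfl

lemma eulCoeff_revPerm_mul {n : ℕ} (hn : 1 ≤ n) (σ : Equiv.Perm (Fin n)) :
    eulCoeff K σ = (-1 : K) ^ (n + 1) * eulCoeff K (Fin.revPerm * σ) := by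
  have hd : descNum σ ≤ n - 1 := descNum_le_aux σ
  rw [eulCoeff, eulCoeff, descNum_revPerm_mul, Nat.choose_symm hd]
  have hkey : (-1 : K) ^ (n + 1) * (-1 : K) ^ (n - 1 - descNum σ)
      = (-1 : K) ^ descNum σ := by
    rw [← pow_add]
    have h1 : (n + 1) + (n - 1 - descNum σ) = 2 * n - descNum σ := by omega
    rw [h1]
    have h2 : (2 * n - descNum σ) + descNum σ = 2 * n := by omega
    have h3 : (-1 : K) ^ (2 * n - descNum σ) * (-1 : K) ^ descNum σ = 1 := by
      rw [← pow_add, h2, pow_mul]; norm_num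
    have h4 : (-1 : K) ^ descNum σ * (-1 : K) ^ descNum σ = 1 := by
      rw [← pow_add]
      exact Even.neg_one_pow ⟨descNum σ, rfl⟩
    calc (-1 : K) ^ (2 * n - descNum σ)
        = (-1 : K) ^ (2 * n - descNum σ) * ((-1 : K) ^ descNum σ * (-1 : K) ^ descNum σ) := by
          rw [h4, mul_one]
      _ = ((-1 : K) ^ (2 * n - descNum σ) * (-1 : K) ^ descNum σ) * (-1 : K) ^ descNum σ := by
          ring
      _ = (-1 : K) ^ descNum σ := by rw [h3, one_mul]
  rw [← mul_assoc, hkey]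

/-- Symmetry of the Eulerian idempotent: for every word `w₁⋯wₙ` of length `n ≥ 1`,
`eₙ(w₁⋯wₙ) = (-1)^{n+1} eₙ(wₙ⋯w₁)`. -/
theorem stmt7 (n : ℕ) (hn : 1 ≤ n) (v : Fin n → Fin 2) :
    eul K n v = ((-1 : K) ^ (n + 1)) • eul K n (fun i => v i.rev) := by
  rw [eul, eul, Finset.smul_sum]
  refine Fintype.sum_equiv (Equiv.mulLeft (Fin.revPerm : Equiv.Perm (Fin n))) _ _ fun σ => ?_
  rw [smul_smul, eulCoeff_revPerm_mul K hn σ]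
  have hfn : (fun i => v (((Equiv.mulLeft (Fin.revPerm : Equiv.Perm (Fin n))) σ) i).rev)
      = fun i => v (σ i) := by
    funext i
    simp [Equiv.Perm.mul_apply]
  rw [hfn, Equiv.coe_mulLeft]

end
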